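/- Let Λ ⊂ ℝ² be a hexagonal lattice with minimal vector length λ, i.e. Λ = A·(ℤb₁ + ℤb₂) with ‖b₁‖ = ‖b₂‖ = ‖b₂ − b₁‖ = λ, and let F = {α₁b₁ + α₂b₂ : α₁, α₂ ∈ (−1/2, 1/2]} be the fundamental parallelogram. Then for every w ∈ F, the set B(w) = {v ∈ Λ : ‖v − w‖ < λ} has at most 4 elements; moreover B(w) ⊆ {0, v₁, v₂, v₃} with ‖v₁ − w‖ ≥ √3·λ/4, ‖v₂ − w‖ ≥ λ/2 and ‖v₃ − w‖ ≥ √3·λ/2 for appropriate lattice points v₁, v₂, v₃. -/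

import Mathlib

def Qh (a b : ℝ) (m n : ℤ) : ℝ :=
  ((m:ℝ)-a)^2 + ((m:ℝ)-a)*((n:ℝ)-b) + ((n:ℝ)-b)^2

def AX (a b : ℝ) : Prop :=
  ∃ m₁ n₁ m₂ n₂ m₃ n₃ : ℤ,
    (∀ m n : ℤ, Qh a b m n < 1 →
      (m = 0 ∧ n = 0) ∨ (m = m₁ ∧ n = n₁) ∨ (m = m₂ ∧ n = n₂) ∨ (m = m₃ ∧ n = n₃)) ∧
    3/16 ≤ Qh a b m₁ n₁ ∧ 1/4 ≤ Qh a b m₂ n₂ ∧ 3/4 ≤ Qh a b m₃ n₃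

lemma AX_flip (a b : ℝ) (h : AX (-a) (-b)) : AX a b := by
  obtain ⟨m₁, n₁, m₂, n₂, m₃, n₃, hc, h1, h2, h3⟩ := h
  have hQ : ∀ m n : ℤ, Qh a b m n = Qh (-a) (-b) (-m) (-n) := by
    intro m n; unfold Qh; push_cast; ring
  refine ⟨-m₁, -n₁, -m₂, -n₂, -m₃, -n₃, ?_, ?_, ?_, ?_⟩
  · intro m n h'
    rw [hQ] at h'
    have := hc (-m) (-n) h'
    omega
  · rw [hQ]; simpa using h1
  · rw [hQ]; simpa using h2
  · rw [hQ]; simpa using h3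

lemma core_range (a b : ℝ) (ha1 : -(1:ℝ)/2 ≤ a) (ha2 : a ≤ 1/2)
    (hb1 : -(1:ℝ)/2 ≤ b) (hb2 : b ≤ 1/2) :
    ∀ m n : ℤ, Qh a b m n < 1 → -1 ≤ m ∧ m ≤ 1 ∧ -1 ≤ n ∧ n ≤ 1 := by
  intro m n h
  unfold Qh at h
  have hm2 : ((m:ℝ)-a)^2 < 4/3 := by nlinarith [sq_nonneg ((m:ℝ) - a + 2*((n:ℝ)-b))]
  have hn2 : ((n:ℝ)-b)^2 < 4/3 := by nlinarith [sq_nonneg ((n:ℝ) - b + 2*((m:ℝ)-a))]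
  have h1 : ((-2:ℝ) < m ∧ (m:ℝ) < 2) := by constructor <;> nlinarith
  have h2 : ((-2:ℝ) < n ∧ (n:ℝ) < 2) := by constructor <;> nlinarith
  have i1 : (-2:ℤ) < m := by exact_mod_cast h1.1
  have i2 : (m:ℤ) < 2 := by exact_mod_cast h1.2
  have i3 : (-2:ℤ) < n := by exact_mod_cast h2.1
  have i4 : (n:ℤ) < 2 := by exact_mod_cast h2.2
  omega

set_option maxHeartbeats 1000000 in
lemma clsPP (a b : ℝ) (ha0 : 0 ≤ a) (ha2 : a ≤ 1/2) (hb0 : 0 ≤ b) (hb2 : b ≤ 1/2) :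
    ∀ m n : ℤ, Qh a b m n < 1 →
      (m = 0 ∧ n = 0) ∨ (m = 1 ∧ n = 0) ∨ (m = 0 ∧ n = 1) ∨
      (m = 1 ∧ n = 1) ∨ (m = 1 ∧ n = -1) ∨ (m = -1 ∧ n = 1) := by
  intro m n h
  obtain ⟨l1, l2, l3, l4⟩ := core_range a b (by linarith) ha2 (by linarith) hb2 m n h
  unfold Qh at h
  interval_cases m <;> interval_cases n
  · exfalso; push_cast at h
    nlinarith [sq_nonneg a, sq_nonneg b, mul_nonneg ha0 hb0]
  · exfalso; push_cast at h
    nlinarith [sq_nonneg a, sq_nonneg b, mul_nonneg ha0 hb0]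
  · omega
  · exfalso; push_cast at h
    nlinarith [sq_nonneg a, sq_nonneg b, mul_nonneg ha0 hb0]
  · omega
  · omega
  · omega
  · omega
  · omega

set_option maxHeartbeats 1000000 in
lemma AX_PP (a b : ℝ) (ha0 : 0 ≤ a) (ha2 : a ≤ 1/2) (hb0 : 0 ≤ b) (hb2 : b ≤ 1/2) :
    AX a b := by
  have q10 : 3/16 ≤ Qh a b 1 0 := by
    unfold Qh; push_cast
    nlinarith [sq_nonneg (2*b - 1 + a),
      mul_nonneg (by linarith : (0:ℝ) ≤ 1/2 - a) (by linarith : (0:ℝ) ≤ 3/2 - a)]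
  have q01 : 3/16 ≤ Qh a b 0 1 := by
    unfold Qh; push_cast
    nlinarith [sq_nonneg (2*a - 1 + b),
      mul_nonneg (by linarith : (0:ℝ) ≤ 1/2 - b) (by linarith : (0:ℝ) ≤ 3/2 - b)]
  have q11 : 3/4 ≤ Qh a b 1 1 := by
    unfold Qh; push_cast
    nlinarith [mul_nonneg (by linarith : (0:ℝ) ≤ 1/2 - a) (by linarith : (0:ℝ) ≤ 3/2 - a),
      mul_nonneg (by linarith : (0:ℝ) ≤ 1/2 - b) (by linarith : (0:ℝ) ≤ 3/2 - b),
      mul_nonneg (by linarith : (0:ℝ) ≤ 1/2 - a) (by linarith : (0:ℝ) ≤ 1/2 - b)]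
  have q1m1 : 3/4 ≤ Qh a b 1 (-1) := by
    unfold Qh; push_cast
    nlinarith [sq_nonneg (1 - 2*a - b), sq_nonneg b]
  have qm11 : 3/4 ≤ Qh a b (-1) 1 := by
    unfold Qh; push_cast
    nlinarith [sq_nonneg (1 - 2*b - a), sq_nonneg a]
  have cls := clsPP a b ha0 ha2 hb0 hb2
  have swap : ∀ s : ℝ, Qh a b 0 1 < s → 1/2 - s ≤ Qh a b 1 0 := by
    intro s hs
    unfold Qh at hs ⊢; push_cast at hs ⊢
    nlinarith [sq_nonneg (1-2*a), sq_nonneg (1-2*b), sq_nonneg (2-2*a-2*b)]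
  by_cases hd1 : Qh a b 1 (-1) < 1
  · have ex11 : ¬ Qh a b 1 1 < 1 := by
      intro h
      unfold Qh at h hd1; push_cast at h hd1
      nlinarith [sq_nonneg (1-a), sq_nonneg b, sq_nonneg (1-a-b)]
    have exm11 : ¬ Qh a b (-1) 1 < 1 := by
      intro h
      unfold Qh at h hd1; push_cast at h hd1
      nlinarith [sq_nonneg a, sq_nonneg b, sq_nonneg (a+b)]
    by_cases hs : Qh a b 0 1 < 1/4
    · refine ⟨0, 1, 1, 0, 1, -1, ?_, q01, by linarith [swap (1/4) hs], q1m1⟩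
      intro m n h
      rcases cls m n h with h'|h'|h'|h'|h'|h'
      · omega
      · omega
      · omega
      · exfalso; obtain ⟨rfl, rfl⟩ := h'; exact ex11 h
      · omega
      · exfalso; obtain ⟨rfl, rfl⟩ := h'; exact exm11 h
    · refine ⟨1, 0, 0, 1, 1, -1, ?_, q10, by push_neg at hs; linarith, q1m1⟩
      intro m n h
      rcases cls m n h with h'|h'|h'|h'|h'|h'
      · omega
      · omega
      · omega
      · exfalso; obtain ⟨rfl, rfl⟩ := h'; exact ex11 h
      · omega
      · exfalso; obtain ⟨rfl, rfl⟩ := h'; exact exm11 h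
  · by_cases hd2 : Qh a b (-1) 1 < 1
    · have ex11 : ¬ Qh a b 1 1 < 1 := by
        intro h
        unfold Qh at h hd2; push_cast at h hd2
        nlinarith [sq_nonneg a, sq_nonneg (1-b), sq_nonneg (a-1+b)]
      by_cases hs : Qh a b 0 1 < 1/4
      · refine ⟨0, 1, 1, 0, -1, 1, ?_, q01, by linarith [swap (1/4) hs], qm11⟩
        intro m n h
        rcases cls m n h with h'|h'|h'|h'|h'|h'
        · omega
        · omega
        · omega
        · exfalso; obtain ⟨rfl, rfl⟩ := h'; exact ex11 h
        · exfalso; obtain ⟨rfl, rfl⟩ := h'; exact hd1 h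
        · omega
      · refine ⟨1, 0, 0, 1, -1, 1, ?_, q10, by push_neg at hs; linarith, qm11⟩
        intro m n h
        rcases cls m n h with h'|h'|h'|h'|h'|h'
        · omega
        · omega
        · omega
        · exfalso; obtain ⟨rfl, rfl⟩ := h'; exact ex11 h
        · exfalso; obtain ⟨rfl, rfl⟩ := h'; exact hd1 h
        · omega
    · by_cases hs : Qh a b 0 1 < 1/4
      · refine ⟨0, 1, 1, 0, 1, 1, ?_, q01, by linarith [swap (1/4) hs], q11⟩
        intro m n h
        rcases cls m n h with h'|h'|h'|h'|h'|h'
        · omega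
        · omega
        · omega
        · omega
        · exfalso; obtain ⟨rfl, rfl⟩ := h'; exact hd1 h
        · exfalso; obtain ⟨rfl, rfl⟩ := h'; exact hd2 h
      · refine ⟨1, 0, 0, 1, 1, 1, ?_, q10, by push_neg at hs; linarith, q11⟩
        intro m n h
        rcases cls m n h with h'|h'|h'|h'|h'|h'
        · omega
        · omega
        · omega
        · omega
        · exfalso; obtain ⟨rfl, rfl⟩ := h'; exact hd1 h
        · exfalso; obtain ⟨rfl, rfl⟩ := h'; exact hd2 h

set_option maxHeartbeats 1000000 in
lemma clsPM (a b : ℝ) (ha0 : 0 ≤ a) (ha2 : a ≤ 1/2) (hb0 : b ≤ 0) (hb1 : -(1:ℝ)/2 ≤ b) :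
    ∀ m n : ℤ, Qh a b m n < 1 →
      (m = 0 ∧ n = 0) ∨ (m = 1 ∧ n = 0) ∨ (m = -1 ∧ n = 0) ∨
      (m = 0 ∧ n = 1) ∨ (m = 0 ∧ n = -1) ∨ (m = 1 ∧ n = -1) := by
  intro m n h
  obtain ⟨l1, l2, l3, l4⟩ := core_range a b (by linarith) ha2 hb1 (by linarith) m n h
  unfold Qh at h
  interval_cases m <;> interval_cases n
  · -- (-1,-1)
    exfalso; push_cast at h
    nlinarith [sq_nonneg a, mul_nonneg ha0 (by linarith : (0:ℝ) ≤ 2 + a),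
      mul_nonneg (by linarith : (0:ℝ) ≤ 1 + a) (by linarith : (0:ℝ) ≤ 1 + b)]
  · omega
  · -- (-1,1)
    exfalso; push_cast at h
    nlinarith [sq_nonneg (a+b), mul_nonneg ha0 (by linarith : (0:ℝ) ≤ -b)]
  · omega
  · omega
  · omega
  · omega
  · omega
  · -- (1,1)
    exfalso; push_cast at h
    nlinarith [sq_nonneg (1-a), mul_nonneg (by linarith : (0:ℝ) ≤ -b) (by linarith : (0:ℝ) ≤ 2 - b),
      mul_nonneg (by linarith : (0:ℝ) ≤ 1 - a) (by linarith : (0:ℝ) ≤ 1 - b)]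

set_option maxHeartbeats 1000000 in
lemma AX_PM (a b : ℝ) (ha0 : 0 ≤ a) (ha2 : a ≤ 1/2) (hb0 : b ≤ 0) (hb1 : -(1:ℝ)/2 ≤ b) :
    AX a b := by
  have q1m1 : 1/4 ≤ Qh a b 1 (-1) := by
    unfold Qh; push_cast
    nlinarith [sq_nonneg (a+b),
      mul_nonneg (by linarith : (0:ℝ) ≤ 1/2 - a) (by linarith : (0:ℝ) ≤ 1/2 + b)]
  have q10 : 1/4 ≤ Qh a b 1 0 := by
    unfold Qh; push_cast
    nlinarith [mul_nonneg (by linarith : (0:ℝ) ≤ 1/2 - a) (by linarith : (0:ℝ) ≤ 3/2 - a),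
      mul_nonneg (by linarith : (0:ℝ) ≤ 1 - a) (by linarith : (0:ℝ) ≤ -b), sq_nonneg b]
  have q0m1 : 1/4 ≤ Qh a b 0 (-1) := by
    unfold Qh; push_cast
    nlinarith [mul_nonneg (by linarith : (0:ℝ) ≤ 1/2 + b) (by linarith : (0:ℝ) ≤ 3/2 + b),
      mul_nonneg ha0 (by linarith : (0:ℝ) ≤ 1 + b), sq_nonneg a]
  have qm10 : 3/4 ≤ Qh a b (-1) 0 := by
    unfold Qh; push_cast
    nlinarith [sq_nonneg (2*b + 1 + a), sq_nonneg a, ha0]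
  have q01 : 3/4 ≤ Qh a b 0 1 := by
    unfold Qh; push_cast
    nlinarith [sq_nonneg (2*a - 1 + b),
      mul_nonneg (by linarith : (0:ℝ) ≤ -b) (by linarith : (0:ℝ) ≤ 2 - b)]
  have cls := clsPM a b ha0 ha2 hb0 hb1
  by_cases hm10 : Qh a b (-1) 0 < 1
  · have ex10 : ¬ Qh a b 1 0 < 1 := by
      intro h
      unfold Qh at h hm10; push_cast at h hm10
      nlinarith [sq_nonneg a, sq_nonneg b, sq_nonneg (a+b)]
    by_cases h01 : Qh a b 0 1 < 1
    · have ex0m1 : ¬ Qh a b 0 (-1) < 1 := by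
        intro h
        unfold Qh at h h01; push_cast at h h01
        nlinarith [sq_nonneg a, sq_nonneg b, sq_nonneg (a+b)]
      refine ⟨1, -1, -1, 0, 0, 1, ?_, by linarith, by linarith, q01⟩
      intro m n h
      rcases cls m n h with h'|h'|h'|h'|h'|h'
      · omega
      · exfalso; obtain ⟨rfl, rfl⟩ := h'; exact ex10 h
      · omega
      · omega
      · exfalso; obtain ⟨rfl, rfl⟩ := h'; exact ex0m1 h
      · omega
    · refine ⟨1, -1, 0, -1, -1, 0, ?_, by linarith, q0m1, qm10⟩
      intro m n h
      rcases cls m n h with h'|h'|h'|h'|h'|h'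
      · omega
      · exfalso; obtain ⟨rfl, rfl⟩ := h'; exact ex10 h
      · omega
      · exfalso; obtain ⟨rfl, rfl⟩ := h'; exact h01 h
      · omega
      · omega
  · by_cases h01 : Qh a b 0 1 < 1
    · have ex0m1 : ¬ Qh a b 0 (-1) < 1 := by
        intro h
        unfold Qh at h h01; push_cast at h h01
        nlinarith [sq_nonneg a, sq_nonneg b, sq_nonneg (a+b)]
      refine ⟨1, -1, 1, 0, 0, 1, ?_, by linarith, q10, q01⟩
      intro m n h
      rcases cls m n h with h'|h'|h'|h'|h'|h'
      · omega
      · omega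
      · exfalso; obtain ⟨rfl, rfl⟩ := h'; exact hm10 h
      · omega
      · exfalso; obtain ⟨rfl, rfl⟩ := h'; exact ex0m1 h
      · omega
    · by_cases h3 : Qh a b 1 0 < 3/4
      · have hsum : 3/4 ≤ Qh a b 0 (-1) := by
          unfold Qh at h3 ⊢; push_cast at h3 ⊢
          nlinarith [sq_nonneg (a+b), sq_nonneg (1-2*a), sq_nonneg (1+2*b)]
        refine ⟨1, -1, 1, 0, 0, -1, ?_, by linarith, q10, hsum⟩
        intro m n h
        rcases cls m n h with h'|h'|h'|h'|h'|h'
        · omega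
        · omega
        · exfalso; obtain ⟨rfl, rfl⟩ := h'; exact hm10 h
        · exfalso; obtain ⟨rfl, rfl⟩ := h'; exact h01 h
        · omega
        · omega
      · refine ⟨1, -1, 0, -1, 1, 0, ?_, by linarith, q0m1, by push_neg at h3; linarith⟩
        intro m n h
        rcases cls m n h with h'|h'|h'|h'|h'|h'
        · omega
        · omega
        · exfalso; obtain ⟨rfl, rfl⟩ := h'; exact hm10 h
        · exfalso; obtain ⟨rfl, rfl⟩ := h'; exact h01 h
        · omega
        · omega

set_option maxHeartbeats 1000000 in
theorem stmt_17 (b₁ b₂ : EuclideanSpace ℝ (Fin 2)) (lam : ℝ) (hlam : 0 < lam)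
    (hb₁ : ‖b₁‖ = lam) (hb₂ : ‖b₂‖ = lam) (hb₁₂ : ‖b₂ - b₁‖ = lam)
    (Λ : Set (EuclideanSpace ℝ (Fin 2)))
    (hΛ : Λ = {v | ∃ m n : ℤ, v = m • b₁ + n • b₂})
    (hmin : ∀ v ∈ Λ, v ≠ 0 → lam ≤ ‖v‖)
    (w : EuclideanSpace ℝ (Fin 2))
    (hw : ∃ α₁ α₂ : ℝ, α₁ ∈ Set.Ioc (-(1 : ℝ) / 2) (1 / 2) ∧
      α₂ ∈ Set.Ioc (-(1 : ℝ) / 2) (1 / 2) ∧ w = α₁ • b₁ + α₂ • b₂) :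
    Set.ncard {v ∈ Λ | ‖v - w‖ < lam} ≤ 4 ∧
    ∃ v₁ v₂ v₃, v₁ ∈ Λ ∧ v₂ ∈ Λ ∧ v₃ ∈ Λ ∧
      {v ∈ Λ | ‖v - w‖ < lam} ⊆ {0, v₁, v₂, v₃} ∧
      Real.sqrt 3 * lam / 4 ≤ ‖v₁ - w‖ ∧ lam / 2 ≤ ‖v₂ - w‖ ∧
      Real.sqrt 3 * lam / 2 ≤ ‖v₃ - w‖ := by
  obtain ⟨a, b, ⟨ha1, ha2⟩, ⟨hb1, hb2⟩, hw'⟩ := hw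
  have h11 : (inner ℝ b₁ b₁ : ℝ) = lam^2 := by rw [real_inner_self_eq_norm_sq, hb₁]
  have h22 : (inner ℝ b₂ b₂ : ℝ) = lam^2 := by rw [real_inner_self_eq_norm_sq, hb₂]
  have h21 : (inner ℝ b₂ b₁ : ℝ) = lam^2/2 := by
    have h := (@norm_sub_sq_real (EuclideanSpace ℝ (Fin 2)) _ _ b₂ b₁)
    rw [hb₁, hb₂, hb₁₂] at h
    nlinarith [h]
  have h12 : (inner ℝ b₁ b₂ : ℝ) = lam^2/2 := by rw [real_inner_comm]; exact h21
  have hkey : ∀ x y : ℝ, ‖(x • b₁ + y • b₂) - w‖^2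
      = lam^2 * ((x-a)^2 + (x-a)*(y-b) + (y-b)^2) := by
    intro x y
    have e : (x • b₁ + y • b₂) - w = (x-a) • b₁ + (y-b) • b₂ := by rw [hw']; module
    rw [e, ← real_inner_self_eq_norm_sq]
    simp only [inner_add_left, inner_add_right, real_inner_smul_left, real_inner_smul_right,
      h11, h22, h12, h21]
    ring
  have hcast : ∀ m n : ℤ,
      ((m:ℝ) • b₁ + (n:ℝ) • b₂) = (m • b₁ + n • b₂ : EuclideanSpace ℝ (Fin 2)) := by
    intro m n; simp [Int.cast_smul_eq_zsmul]
  have hlt : ∀ x y : ℝ,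
      (‖(x • b₁ + y • b₂) - w‖ < lam ↔ (x-a)^2 + (x-a)*(y-b) + (y-b)^2 < 1) := by
    intro x y
    constructor
    · intro h
      nlinarith [hkey x y, norm_nonneg ((x • b₁ + y • b₂) - w), hlam, mul_pos hlam hlam]
    · intro h
      nlinarith [hkey x y, norm_nonneg ((x • b₁ + y • b₂) - w), hlam, mul_pos hlam hlam]
  have hge : ∀ x y c : ℝ, 0 ≤ c → c^2 ≤ lam^2 * ((x-a)^2 + (x-a)*(y-b) + (y-b)^2) →
      c ≤ ‖(x • b₁ + y • b₂) - w‖ := by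
    intro x y c hc h
    nlinarith [hkey x y, norm_nonneg ((x • b₁ + y • b₂) - w)]
  have hmem : ∀ m n : ℤ, (m • b₁ + n • b₂ : EuclideanSpace ℝ (Fin 2)) ∈ Λ := by
    intro m n; rw [hΛ]; exact ⟨m, n, rfl⟩
  have hsq3 : Real.sqrt 3 ^ 2 = 3 := Real.sq_sqrt (by norm_num)
  have hax : AX a b := by
    rcases le_total 0 a with ha0 | ha0
    · rcases le_total 0 b with hb0 | hb0
      · exact AX_PP a b ha0 ha2 hb0 hb2
      · exact AX_PM a b ha0 ha2 hb0 (by linarith)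
    · rcases le_total 0 b with hb0 | hb0
      · exact AX_flip a b
          (AX_PM (-a) (-b) (by linarith) (by linarith) (by linarith) (by linarith))
      · exact AX_flip a b
          (AX_PP (-a) (-b) (by linarith) (by linarith) (by linarith) (by linarith))
  obtain ⟨m₁, n₁, m₂, n₂, m₃, n₃, hcls, hq1, hq2, hq3⟩ := hax
  unfold Qh at hq1 hq2 hq3
  have hsub : {v ∈ Λ | ‖v - w‖ < lam} ⊆
      {0, m₁ • b₁ + n₁ • b₂, m₂ • b₁ + n₂ • b₂, m₃ • b₁ + n₃ • b₂} := by
    rintro v ⟨hvΛ, hvd⟩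
    rw [hΛ] at hvΛ
    obtain ⟨m, n, rfl⟩ := hvΛ
    rw [← hcast m n] at hvd
    have hQ : Qh a b m n < 1 := (hlt (m:ℝ) (n:ℝ)).1 hvd
    rcases hcls m n hQ with ⟨rfl, rfl⟩ | ⟨rfl, rfl⟩ | ⟨rfl, rfl⟩ | ⟨rfl, rfl⟩
    · have e : ((0:ℤ) • b₁ + (0:ℤ) • b₂ : EuclideanSpace ℝ (Fin 2)) = 0 := by simp
      rw [e]; exact Set.mem_insert _ _
    · exact Set.mem_insert_of_mem _ (Set.mem_insert _ _)
    · exact Set.mem_insert_of_mem _ (Set.mem_insert_of_mem _ (Set.mem_insert _ _))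
    · exact Set.mem_insert_of_mem _ (Set.mem_insert_of_mem _ (Set.mem_insert_of_mem _ rfl))
  constructor
  · have hfin : ({0, m₁ • b₁ + n₁ • b₂, m₂ • b₁ + n₂ • b₂, m₃ • b₁ + n₃ • b₂} :
        Set (EuclideanSpace ℝ (Fin 2))).Finite :=
      (((Set.finite_singleton _).insert _).insert _).insert _
    have h1 := Set.ncard_le_ncard hsub hfin
    have t0 := Set.ncard_insert_le (0 : EuclideanSpace ℝ (Fin 2))
      {m₁ • b₁ + n₁ • b₂, m₂ • b₁ + n₂ • b₂, m₃ • b₁ + n₃ • b₂}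
    have t1 := Set.ncard_insert_le (m₁ • b₁ + n₁ • b₂ : EuclideanSpace ℝ (Fin 2))
      {m₂ • b₁ + n₂ • b₂, m₃ • b₁ + n₃ • b₂}
    have t2 := Set.ncard_insert_le (m₂ • b₁ + n₂ • b₂ : EuclideanSpace ℝ (Fin 2))
      {m₃ • b₁ + n₃ • b₂}
    have t3 := Set.ncard_singleton (m₃ • b₁ + n₃ • b₂ : EuclideanSpace ℝ (Fin 2))
    omega
  · refine ⟨m₁ • b₁ + n₁ • b₂, m₂ • b₁ + n₂ • b₂, m₃ • b₁ + n₃ • b₂,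
      hmem _ _, hmem _ _, hmem _ _, hsub, ?_, ?_, ?_⟩
    · rw [← hcast m₁ n₁]
      refine hge _ _ _ (by positivity) ?_
      nlinarith [hq1, sq_nonneg lam, hsq3]
    · rw [← hcast m₂ n₂]
      refine hge _ _ _ (by positivity) ?_
      nlinarith [hq2, sq_nonneg lam]
    · rw [← hcast m₃ n₃]
      refine hge _ _ _ (by positivity) ?_
      nlinarith [hq3, sq_nonneg lam, hsq3]
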